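/- Suppose the closed-loop integrator chain ẋᵢ = x_{i+1} (i = 1,…,n-1), ẋₙ = v(t, x + η) + d(t) with n ≥ 2 has an absolute deadline at T. Then the origin is not uniformly Lyapunov stable: there exist ε > 0 such that for every δ > 0 there exist s ∈ [0,T), t ∈ [s,T), and a solution with ‖x(s)‖ ≤ δ but ‖x(t)‖ > ε. -/

import Mathlib

open Set Filter

lemma abs_apply_le_norm' {n : ℕ} (x : EuclideanSpace ℝ (Fin n)) (i : Fin n) :
    |x i| ≤ ‖x‖ := by
  rw [EuclideanSpace.norm_eq]
  have h1 : |x i| = Real.sqrt (‖x i‖ ^ 2) := by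
    rw [Real.sqrt_sq_eq_abs]; simp [Real.norm_eq_abs, abs_abs]
  rw [h1]
  apply Real.sqrt_le_sqrt
  exact Finset.single_le_sum (f := fun j => ‖x j‖ ^ 2)
    (fun j _ => by positivity) (Finset.mem_univ i)


/-- A solution, on `[s,T)`, of the closed-loop integrator chain
    ẋᵢ = x_{i+1} (i < n), ẋₙ = v(t, x + η(t)) + d(t). -/
def ChainSol (n : ℕ) (hn : 0 < n) (T : ℝ)
    (v : ℝ → EuclideanSpace ℝ (Fin n) → ℝ) (d : ℝ → ℝ)
    (η : ℝ → EuclideanSpace ℝ (Fin n)) (s : ℝ)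
    (x : ℝ → EuclideanSpace ℝ (Fin n)) : Prop :=
  ∀ t ∈ Set.Ico s T,
    (∀ i : Fin n, ∀ h : (i : ℕ) + 1 < n,
      HasDerivAt (fun τ => x τ i) (x t ⟨(i : ℕ) + 1, h⟩) t) ∧
    HasDerivAt (fun τ => x τ ⟨n - 1, Nat.sub_lt hn one_pos⟩)
      (v t (x t + η t) + d t) t

/-- Absolute deadline at `T` (with η ≡ 0). -/
def ChainAbsDeadline (n : ℕ) (hn : 0 < n) (T : ℝ)
    (v : ℝ → EuclideanSpace ℝ (Fin n) → ℝ) (d : ℝ → ℝ) : Prop :=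
  ∀ s ∈ Set.Ico (0:ℝ) T, ∀ x : ℝ → EuclideanSpace ℝ (Fin n),
    ChainSol n hn T v d (fun _ => 0) s x →
    Filter.Tendsto x (nhdsWithin T (Set.Iio T)) (nhds 0)

/-- Theorem 1(iv): under an absolute deadline at `T`, the origin of
    the noise-free closed loop is not uniformly Lyapunov stable: there is ε > 0
    such that for every δ > 0 some solution satisfies ‖x(s)‖ ≤ δ but ‖x(t)‖ > ε
    at some later t ∈ [s,T). -/
theorem stmt7 (n : ℕ) (hn : 2 ≤ n) (T : ℝ) (hT : 0 < T)
    (v : ℝ → EuclideanSpace ℝ (Fin n) → ℝ) (d : ℝ → ℝ)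
    (hex : ∀ s ∈ Set.Ico (0:ℝ) T, ∀ ξ : EuclideanSpace ℝ (Fin n),
      ∃ x : ℝ → EuclideanSpace ℝ (Fin n),
        ChainSol n (by omega) T v d (fun _ => 0) s x ∧ x s = ξ)
    (habs : ChainAbsDeadline n (by omega) T v d) :
    ∃ ε > (0:ℝ), ∀ δ > (0:ℝ), ∃ s ∈ Set.Ico (0:ℝ) T, ∃ t ∈ Set.Ico s T,
      ∃ x : ℝ → EuclideanSpace ℝ (Fin n),
        ChainSol n (by omega) T v d (fun _ => 0) s x ∧
        ‖x s‖ ≤ δ ∧ ε < ‖x t‖ := by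
  refine ⟨1, one_pos, fun δ hδ => ?_⟩
  set s : ℝ := max 0 (T - δ/4) with hs_def
  have hs0 : 0 ≤ s := le_max_left _ _
  have hsT : s < T := max_lt hT (by linarith)
  have hTs : T - s ≤ δ/4 := by
    have := le_max_right 0 (T - δ/4); linarith
  have i0 : Fin n := ⟨0, by omega⟩
  obtain ⟨x, hsol, hxs⟩ := hex s ⟨hs0, hsT⟩ (EuclideanSpace.single ⟨0, by omega⟩ δ)
  have htend := habs s ⟨hs0, hsT⟩ x hsol
  -- component 0 tends to 0
  have htend0 : Tendsto (fun t => x t (⟨0, by omega⟩ : Fin n)) (nhdsWithin T (Iio T)) (nhds 0) := by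
    have hc := ((EuclideanSpace.proj (𝕜 := ℝ) (⟨0, by omega⟩ : Fin n)).continuous.tendsto 0).comp htend
    simpa [Function.comp_def] using hc
  have hev1 : ∀ᶠ t in nhdsWithin T (Iio T), |x t (⟨0, by omega⟩ : Fin n)| < δ/2 := by
    have := htend0 (Metric.ball_mem_nhds 0 (by positivity : (0:ℝ) < δ/2))
    filter_upwards [this] with t ht
    simpa [Real.dist_eq] using ht
  have hev2 : ∀ᶠ t in nhdsWithin T (Iio T), t ∈ Ioo s T :=
    Ioo_mem_nhdsLT_of_mem ⟨hsT, le_rfl⟩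
  have hne : (nhdsWithin T (Iio T)).NeBot := nhdsLT_neBot T
  obtain ⟨t, ht1, ht2⟩ := (hev1.and hev2).exists
  -- MVT on [s,t] for component 0
  have hst : s < t := ht2.1
  have htT : t < T := ht2.2
  have hderiv : ∀ τ ∈ Ico s T,
      HasDerivAt (fun τ => x τ (⟨0, by omega⟩ : Fin n)) (x τ (⟨1, by omega⟩ : Fin n)) τ := by
    intro τ hτ
    have := (hsol τ hτ).1 ⟨0, by omega⟩ (by simpa using (by omega : 0 + 1 < n))
    convert this using 2
  have hderiv' : ∀ τ ∈ Ioo s t,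
      HasDerivAt (fun τ => x τ (⟨0, by omega⟩ : Fin n)) (x τ (⟨1, by omega⟩ : Fin n)) τ :=
    fun τ hτ => hderiv τ ⟨hτ.1.le, hτ.2.trans htT⟩
  have hcont : ContinuousOn (fun τ => x τ (⟨0, by omega⟩ : Fin n)) (Icc s t) := by
    intro τ hτ
    exact (hderiv τ ⟨hτ.1, lt_of_le_of_lt hτ.2 htT⟩).continuousAt.continuousWithinAt
  obtain ⟨c, hc, hceq⟩ := exists_hasDerivAt_eq_slope
    (fun τ => x τ (⟨0, by omega⟩ : Fin n)) (fun τ => x τ (⟨1, by omega⟩ : Fin n))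
    hst hcont hderiv'
  -- x s component 0 = δ
  have hxs0 : x s (⟨0, by omega⟩ : Fin n) = δ := by
    rw [hxs]; simp [EuclideanSpace.single_apply]
  have hxnorm : ‖x s‖ ≤ δ := by
    rw [hxs, EuclideanSpace.norm_single]
    simp [abs_of_pos hδ]
  -- estimate
  have hts : t - s ≤ δ/4 := by linarith
  have hnum : δ/2 ≤ |x t (⟨0, by omega⟩ : Fin n) - x s (⟨0, by omega⟩ : Fin n)| := by
    rw [hxs0]
    have h1 := ht1
    have := abs_sub_abs_le_abs_sub δ (x t (⟨0, by omega⟩ : Fin n))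
    rw [abs_sub_comm]
    rw [abs_of_pos hδ] at this
    linarith
  have hc2 : 2 ≤ |x c (⟨1, by omega⟩ : Fin n)| := by
    rw [hceq, abs_div, abs_of_pos (by linarith : (0:ℝ) < t - s),
      le_div_iff₀ (by linarith : (0:ℝ) < t - s)]
    linarith
  refine ⟨s, ⟨hs0, hsT⟩, c, ⟨hc.1.le, hc.2.trans ht2.2⟩, x, hsol, hxnorm, ?_⟩
  have := abs_apply_le_norm' (x c) ⟨1, by omega⟩
  linarith
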